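/- Let G be a finite abelian group, k a field, ε, ρ : G × G → k* two 2-cocycles. Let A_1 = (Map(G,k), +, *_ε), A_ρ = (Map(G,k), +, *_{ερ}) and F = (Map(G,k), +, *_ρ) be the corresponding twisted group algebras (where ερ denotes the pointwise product of cocycles). Fix a k-basis r_1,…,r_N of Map(G,k) with dual basis r_1*,…,r_N* for the trace form (r,s) ↦ Σ_T r(T)s(T). Then the k-linear map α : A_ρ ⊗_k F → A_1 ⊗_k F determined by x ⊗ 1 ↦ Σ_i (r_i* · x) ⊗ r_i (pointwise product r_i* · x in the first factor) is a homomorphism of F-algebras, and in fact an isomorphism. -/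

import Mathlib

open Finset

/-- Let `ε, ρ` be 2-cocycles on a finite abelian group `G` with values in `k*`, and
let `A₁ = (Map(G,k), *_ε)`, `A_ρ = (Map(G,k), *_{ερ})`, `F = (Map(G,k), *_ρ)` be the
associated twisted group algebras. Identifying `A ⊗_k F` with `Map(G×G, k)`
(the `F`-algebra structure acting through the second factor), the `F`-linear map
`α : A_ρ ⊗ F → A₁ ⊗ F` determined by `x ⊗ 1 ↦ Σ_i (r_i*·x) ⊗ r_i` (for a basis
`r_i` with trace-form dual basis `r_i*`) is an isomorphism of `F`-algebras. -/
theorem stmt_17 {G : Type*} [AddCommGroup G] [Fintype G] [DecidableEq G]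
    {k : Type*} [Field k] (ε ρ : G → G → kˣ)
    (hcocε : ∀ T₁ T₂ T₃ : G, ε T₁ T₂ * ε (T₁ + T₂) T₃ = ε T₁ (T₂ + T₃) * ε T₂ T₃)
    (hcocρ : ∀ T₁ T₂ T₃ : G, ρ T₁ T₂ * ρ (T₁ + T₂) T₃ = ρ T₁ (T₂ + T₃) * ρ T₂ T₃)
    (hsymρ : ∀ S T : G, ρ S T = ρ T S)
    {ι : Type*} [Fintype ι] [DecidableEq ι]
    (r : Module.Basis ι k (G → k)) (rs : ι → G → k)
    (hdual : ∀ i j : ι, ∑ T : G, rs i T * r j T = if i = j then 1 else 0) :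
    -- multiplication on `A ⊗ F` for twisting cocycles `τ₁` (first factor)
    -- and `ρ` (second factor):
    let mulT : (G → G → kˣ) → (G × G → k) → (G × G → k) → (G × G → k) :=
      fun τ₁ f g p => ∑ q₁ : G, ∑ q₂ : G,
        (τ₁ q₁ (p.1 - q₁) : k) * (ρ q₂ (p.2 - q₂) : k) *
          f (q₁, q₂) * g (p.1 - q₁, p.2 - q₂)
    -- the action of `y ∈ F` on `A ⊗ F`, `y • (a ⊗ b) = a ⊗ (y *_ρ b)`:
    let smulF : (G → k) → (G × G → k) → (G × G → k) :=
      fun y f p => ∑ q : G, (ρ q (p.2 - q) : k) * y q * f (p.1, p.2 - q)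
    -- the element `x ⊗ 1_F` (the unit of `F` is `ρ(0,0)⁻¹ δ₀`):
    let emb : (G → k) → (G × G → k) :=
      fun x p => x p.1 * ((ρ 0 0 : k)⁻¹) * (if p.2 = 0 then 1 else 0)
    -- simple tensors `a ⊗ b`:
    let tens : (G → k) → (G → k) → (G × G → k) := fun a b p => a p.1 * b p.2
    ∃ A : (G × G → k) → (G × G → k),
      Function.Bijective A ∧
      (∀ f g : G × G → k, A (f + g) = A f + A g) ∧
      (∀ (c : k) (f : G × G → k), A (c • f) = c • A f) ∧
      (∀ (y : G → k) (f : G × G → k), A (smulF y f) = smulF y (A f)) ∧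
      (∀ x : G → k,
        A (emb x) = ∑ i : ι, tens (fun T => rs i T * x T) (r i)) ∧
      (∀ f g : G × G → k,
        A (mulT (fun S T => ε S T * ρ S T) f g) = mulT ε (A f) (A g)) := by
  intro mulT smulF emb tens
  -- the key cocycle identity in `k`
  have key : ∀ w x y z : G, (ρ (x+z) (w+y) : k) * ρ w y * ρ x z
      = ρ (w+x) (y+z) * ρ x w * ρ z y := by
    intro w x y z
    have h1 := congrArg (Units.val) (hcocρ (x+z) w y)
    have h2 := congrArg (Units.val) (hcocρ (x+w) z y)
    have h3 := congrArg (Units.val) (hcocρ x z w)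
    have h4 := congrArg (Units.val) (hcocρ x w z)
    have hs := congrArg (Units.val) (hsymρ z w)
    simp only [Units.val_mul] at h1 h2 h3 h4 hs
    rw [show x + w + z = x + z + w by abel, show z + y = y + z by abel] at h2
    rw [show w + z = z + w by abel] at h4
    rw [show w + x = x + w by abel]
    linear_combination (-(ρ x z : k)) * h1 + (ρ (x+z+w) y : k) * h3 +
      (ρ (x+z+w) y : k) * (ρ x (z+w) : k) * hs +
      (-(ρ (x+z+w) y : k)) * h4 + (ρ x w : k) * h2
  -- `ρ 0 T = ρ 0 0`
  have hρ0 : ∀ T : G, ρ 0 T = ρ 0 0 := by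
    intro T
    have := hcocρ 0 0 T
    simp only [zero_add] at this
    exact (mul_right_cancel this).symm
  -- dual basis, the other way around
  have hdual' : ∀ S U : G, (∑ i : ι, rs i S * r i U) = if S = U then 1 else 0 := by
    have hcard : Fintype.card ι = Fintype.card G := by
      have h1 := Module.finrank_eq_card_basis r
      rw [Module.finrank_pi] at h1
      omega
    have e : ι ≃ G := Fintype.equivOfCardEq hcard
    have hM : (Matrix.of (fun i T => rs i T) : Matrix ι G k) *
        (Matrix.of (fun T j => r j T) : Matrix G ι k) = 1 := by
      ext i j
      simpa [Matrix.mul_apply, Matrix.one_apply] using hdual i j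
    have hN := (Matrix.mul_eq_one_comm_of_equiv e).mp hM
    intro S U
    have h := congrFun (congrFun hN U) S
    simp only [Matrix.mul_apply, Matrix.one_apply, Matrix.of_apply] at h
    rw [show (if S = U then (1:k) else 0) = if U = S then 1 else 0 by simp [eq_comm], ← h]
    exact Finset.sum_congr rfl fun i _ => mul_comm _ _
  refine ⟨fun f p => (ρ (p.2 - p.1) p.1 : k) * f (p.1, p.2 - p.1), ?_, ?_, ?_, ?_, ?_, ?_⟩
  · -- bijective
    refine Function.bijective_iff_has_inverse.mpr
      ⟨fun g p => (ρ p.2 p.1 : k)⁻¹ * g (p.1, p.1 + p.2), ?_, ?_⟩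
    · intro f
      funext p
      beta_reduce
      rw [show p.1 + p.2 - p.1 = p.2 by abel, ← mul_assoc,
        inv_mul_cancel₀ (Units.ne_zero _), one_mul]
    · intro g
      funext p
      beta_reduce
      rw [show p.1 + (p.2 - p.1) = p.2 by abel, ← mul_assoc,
        mul_inv_cancel₀ (Units.ne_zero _), one_mul]
  · -- additive
    intro f g
    funext p
    simp only [Pi.add_apply]
    ring
  · -- scalar
    intro c f
    funext p
    simp only [Pi.smul_apply, smul_eq_mul]
    ring
  · -- smulF-linear
    intro y f
    funext p
    obtain ⟨S, U⟩ := p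
    simp only [smulF, Finset.mul_sum]
    refine Finset.sum_congr rfl fun q _ => ?_
    have hc := congrArg (Units.val) (hcocρ q (U - S - q) S)
    simp only [Units.val_mul] at hc
    rw [show q + (U - S - q) = U - S by abel, show U - S - q + S = U - q by abel] at hc
    rw [show U - q - S = U - S - q by abel]
    linear_combination (y q * f (S, U - S - q)) * hc
  · -- emb
    intro x
    funext p
    obtain ⟨S, U⟩ := p
    simp only [emb, tens, Finset.sum_apply]
    have hsum : (∑ i : ι, rs i S * x S * r i U) = x S * (if S = U then 1 else 0) := by
      rw [← hdual' S U, Finset.mul_sum]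
      exact Finset.sum_congr rfl fun i _ => by ring
    rw [hsum]
    by_cases h : U - S = 0
    · have hSU : S = U := (sub_eq_zero.mp h).symm
      rw [if_pos h, if_pos hSU, h, hρ0 S]
      field_simp
    · rw [if_neg h, if_neg (fun hq : S = U => h (sub_eq_zero.mpr hq.symm))]
      ring
  · -- multiplicative
    intro f g
    funext p
    obtain ⟨S, U⟩ := p
    simp only [mulT, Finset.mul_sum, Units.val_mul]
    refine Finset.sum_congr rfl fun q₁ _ => ?_
    refine Fintype.sum_equiv (Equiv.addLeft q₁) _ _ fun t => ?_
    simp only [Equiv.coe_addLeft]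
    rw [show q₁ + t - q₁ = t by abel, show U - (q₁ + t) - (S - q₁) = U - S - t by abel]
    have h := key q₁ t (S - q₁) (U - S - t)
    rw [show t + (U - S - t) = U - S by abel, show q₁ + (S - q₁) = S by abel,
      show (S - q₁) + (U - S - t) = U - (q₁ + t) by abel] at h
    linear_combination ((ε q₁ (S - q₁) : k) * f (q₁, t) * g (S - q₁, U - S - t)) * h
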